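/- Let N be a finite-index normal subgroup of a group G acting by ring automorphisms on a ring R, and suppose every ideal of R contains a finite product of primes containing it. Then every G-prime ideal of R equals ⋂_{x ∈ G/N} x•Q for some N-prime ideal Q of R, and conversely every such finite intersection over a G-orbit of an N-prime is G-prime. Consequently, the set of N-primes of R is finite if and only if the set of G-primes of R is finite. -/

import Mathlib

open Pointwise

/-- A two-sided ideal of a (possibly noncommutative) ring, as a subset. -/
structure IsTwoSidedIdealSet (R : Type*) [Ring R] (I : Set R) : Prop where
  zero_mem : (0 : R) ∈ I
  add_mem : ∀ ⦃a b : R⦄, a ∈ I → b ∈ I → a + b ∈ I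
  neg_mem : ∀ ⦃a : R⦄, a ∈ I → -a ∈ I
  mul_mem_left : ∀ (r : R) ⦃a : R⦄, a ∈ I → r * a ∈ I
  mul_mem_right : ∀ (r : R) ⦃a : R⦄, a ∈ I → a * r ∈ I

/-- A prime two-sided ideal: proper, and `A*B ⊆ P` for two-sided ideals `A, B`
implies `A ⊆ P` or `B ⊆ P`.  (Note `A*B ⊆ P` is equivalent to
`∀ a ∈ A, ∀ b ∈ B, a*b ∈ P` since `P` is closed under addition.) -/
def IsPrimeTI (R : Type*) [Ring R] (P : Set R) : Prop :=
  IsTwoSidedIdealSet R P ∧ P ≠ Set.univ ∧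
    ∀ A B : Set R, IsTwoSidedIdealSet R A → IsTwoSidedIdealSet R B →
      (∀ a ∈ A, ∀ b ∈ B, a * b ∈ P) → A ⊆ P ∨ B ⊆ P

/-- A `G`-prime ideal: a proper `G`-stable two-sided ideal `I` such that
`A*B ⊆ I` for `G`-stable two-sided ideals `A, B` implies `A ⊆ I` or `B ⊆ I`. -/
def IsGPrime (G R : Type*) [Group G] [Ring R] [MulSemiringAction G R] (I : Set R) : Prop :=
  IsTwoSidedIdealSet R I ∧ I ≠ Set.univ ∧ (∀ g : G, g • I = I) ∧
    ∀ A B : Set R, IsTwoSidedIdealSet R A → IsTwoSidedIdealSet R B →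
      (∀ g : G, g • A = A) → (∀ g : G, g • B = B) →
      (∀ a ∈ A, ∀ b ∈ B, a * b ∈ I) → A ⊆ I ∨ B ⊆ I


/-- An `N`-prime ideal for a subgroup `N ≤ G`: a proper `N`-stable two-sided
ideal `I` such that `A*B ⊆ I` for `N`-stable two-sided ideals `A, B` implies
`A ⊆ I` or `B ⊆ I`. -/
def IsSubgroupPrime {G : Type*} (R : Type*) [Group G] [Ring R] [MulSemiringAction G R]
    (N : Subgroup G) (I : Set R) : Prop :=
  IsTwoSidedIdealSet R I ∧ I ≠ Set.univ ∧ (∀ g ∈ N, g • I = I) ∧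
    ∀ A B : Set R, IsTwoSidedIdealSet R A → IsTwoSidedIdealSet R B →
      (∀ g ∈ N, g • A = A) → (∀ g ∈ N, g • B = B) →
      (∀ a ∈ A, ∀ b ∈ B, a * b ∈ I) → A ⊆ I ∨ B ⊆ I

namespace GPrimeAux

variable {G R : Type*} [Group G] [Ring R] [MulSemiringAction G R]

theorem mem_smul_iff {g : G} {S : Set R} {x : R} : x ∈ g • S ↔ g⁻¹ • x ∈ S :=
  Set.mem_smul_set_iff_inv_smul_mem

theorem ideal_smul {S : Set R} (hS : IsTwoSidedIdealSet R S) (g : G) :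
    IsTwoSidedIdealSet R (g • S) := by
  constructor
  · rw [mem_smul_iff, smul_zero]; exact hS.zero_mem
  · intro a b ha hb
    rw [mem_smul_iff] at ha hb ⊢
    rw [smul_add]; exact hS.add_mem ha hb
  · intro a ha
    rw [mem_smul_iff] at ha ⊢
    rw [smul_neg]; exact hS.neg_mem ha
  · intro r a ha
    rw [mem_smul_iff] at ha ⊢
    rw [smul_mul']; exact hS.mul_mem_left _ ha
  · intro r a ha
    rw [mem_smul_iff] at ha ⊢
    rw [smul_mul']; exact hS.mul_mem_right _ ha

theorem ideal_iInter {ι : Sort*} {S : ι → Set R} (hS : ∀ i, IsTwoSidedIdealSet R (S i)) :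
    IsTwoSidedIdealSet R (⋂ i, S i) := by
  constructor
  · exact Set.mem_iInter.mpr fun i => (hS i).zero_mem
  · intro a b ha hb
    exact Set.mem_iInter.mpr fun i =>
      (hS i).add_mem (Set.mem_iInter.mp ha i) (Set.mem_iInter.mp hb i)
  · intro a ha
    exact Set.mem_iInter.mpr fun i => (hS i).neg_mem (Set.mem_iInter.mp ha i)
  · intro r a ha
    exact Set.mem_iInter.mpr fun i => (hS i).mul_mem_left r (Set.mem_iInter.mp ha i)
  · intro r a ha
    exact Set.mem_iInter.mpr fun i => (hS i).mul_mem_right r (Set.mem_iInter.mp ha i)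

theorem eq_univ_of_one_mem {I : Set R} (hI : IsTwoSidedIdealSet R I) (h1 : (1 : R) ∈ I) :
    I = Set.univ := by
  ext x
  simp only [Set.mem_univ, iff_true]
  have := hI.mul_mem_left x h1
  rwa [mul_one] at this

theorem ne_univ_of_subset {I P : Set R} (h : I ⊆ P) (hP : P ≠ Set.univ) : I ≠ Set.univ :=
  fun hIu => hP (Set.eq_univ_of_univ_subset (hIu ▸ h))

theorem list_prod_mem {A : Set R} (hA : IsTwoSidedIdealSet R A) :
    ∀ (L : List R) (a : R), a ∈ L → a ∈ A → L.prod ∈ A := by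
  intro L
  induction L with
  | nil => intro a h; simp at h
  | cons b t ih =>
    intro a ha haA
    rw [List.prod_cons]
    rcases List.mem_cons.mp ha with rfl | h
    · exact hA.mul_mem_right _ haA
    · exact hA.mul_mem_left _ (ih a h haA)

theorem multiPrime (S : Set G) (hSinv : ∀ g ∈ S, g⁻¹ ∈ S) (I : Set R)
    (hI : IsTwoSidedIdealSet R I) (hIne : I ≠ Set.univ) (hIst : ∀ g ∈ S, g • I = I)
    (hprime : ∀ A B : Set R, IsTwoSidedIdealSet R A → IsTwoSidedIdealSet R B →
      (∀ g ∈ S, g • A = A) → (∀ g ∈ S, g • B = B) →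
      (∀ a ∈ A, ∀ b ∈ B, a * b ∈ I) → A ⊆ I ∨ B ⊆ I) :
    ∀ (n : ℕ) (As : Fin n → Set R), (∀ i, IsTwoSidedIdealSet R (As i)) →
      (∀ i, ∀ g ∈ S, g • As i = As i) →
      (∀ f : Fin n → R, (∀ i, f i ∈ As i) → (List.ofFn f).prod ∈ I) →
      ∃ i, As i ⊆ I := by
  intro n
  induction n with
  | zero =>
    intro As _ _ hprod
    exfalso
    apply hIne
    apply eq_univ_of_one_mem hI
    have := hprod (fun i => i.elim0) (fun i => i.elim0)
    simpa using this
  | succ n ih =>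
    intro As hAs hst hprod
    set B : Set R := {b | ∀ a ∈ As 0, a * b ∈ I} with hBdef
    have hBideal : IsTwoSidedIdealSet R B := by
      constructor
      · intro a _; rw [mul_zero]; exact hI.zero_mem
      · intro b c hb hc a ha; rw [mul_add]; exact hI.add_mem (hb a ha) (hc a ha)
      · intro b hb a ha; rw [mul_neg]; exact hI.neg_mem (hb a ha)
      · intro r b hb a ha; rw [← mul_assoc]; exact hb _ ((hAs 0).mul_mem_right r ha)
      · intro r b hb a ha; rw [← mul_assoc]; exact hI.mul_mem_right r (hb a ha)
    have hBsub : ∀ g ∈ S, g • B ⊆ B := by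
      rintro g hg x ⟨b, hb, rfl⟩ a ha
      have haA : g⁻¹ • a ∈ As 0 := by
        rw [← hst 0 g hg] at ha
        exact mem_smul_iff.mp ha
      have h1 : (g⁻¹ • a) * b ∈ I := hb _ haA
      have : a * g • b = g • ((g⁻¹ • a) * b) := by
        rw [smul_mul', smul_inv_smul]
      rw [this, ← hIst g hg]
      exact Set.smul_mem_smul_set h1
    have hBst : ∀ g ∈ S, g • B = B := by
      intro g hg
      apply subset_antisymm (hBsub g hg)
      have h2 := Set.smul_set_mono (s := g⁻¹ • B) (a := g) (hBsub g⁻¹ (hSinv g hg))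
      rwa [smul_inv_smul] at h2
    rcases hprime (As 0) B (hAs 0) hBideal (hst 0) hBst (fun a ha b hb => hb a ha) with h | h
    · exact ⟨0, h⟩
    · obtain ⟨i, hi⟩ := ih (fun i => As i.succ) (fun i => hAs i.succ) (fun i => hst i.succ)
        (fun f hf => by
          apply h
          intro a ha
          have := hprod (Fin.cons a f) (by
            intro i
            refine Fin.cases ?_ ?_ i
            · simpa using ha
            · intro j; simpa using hf j)
          simp only [List.ofFn_succ, Fin.cons_zero, Fin.cons_succ, List.prod_cons] at this
          exact this)
      exact ⟨i.succ, hi⟩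

theorem smul_iInter_all (g : G) (Q : Set R) :
    g • (⋂ h : G, h • Q) = ⋂ h : G, h • Q := by
  have key : ∀ g : G, g • (⋂ h : G, h • Q) ⊆ ⋂ h : G, h • Q := by
    intro g
    apply Set.subset_iInter
    intro m
    have h1 : g • (⋂ h : G, h • Q) ⊆ g • ((g⁻¹ * m) • Q) :=
      Set.smul_set_mono (Set.iInter_subset _ (g⁻¹ * m))
    rwa [smul_smul, mul_inv_cancel_left] at h1
  apply subset_antisymm (key g)
  have h2 := Set.smul_set_mono (a := g) (key g⁻¹)
  rwa [smul_inv_smul] at h2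

theorem smul_core_subgroup (N : Subgroup G) (P : Set R) :
    ∀ g ∈ N, g • (⋂ n : N, (n : G) • P) = ⋂ n : N, (n : G) • P := by
  have key : ∀ g ∈ N, g • (⋂ n : N, (n : G) • P) ⊆ ⋂ n : N, (n : G) • P := by
    intro g hg
    apply Set.subset_iInter
    intro m
    have h1 : g • (⋂ n : N, (n : G) • P) ⊆ g • ((((⟨g, hg⟩ : N)⁻¹ * m : N) : G) • P) :=
      Set.smul_set_mono (Set.iInter_subset _ _)
    have h2 : (((⟨g, hg⟩ : N)⁻¹ * m : N) : G) = g⁻¹ * (m : G) := rfl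
    rwa [h2, smul_smul, mul_inv_cancel_left] at h1
  intro g hg
  apply subset_antisymm (key g hg)
  have h2 := Set.smul_set_mono (a := g) (key g⁻¹ (inv_mem hg))
  rwa [smul_inv_smul] at h2

theorem stable_subset_smul {A P : Set R} {g : G} (hA : g⁻¹ • A = A) (h : A ⊆ P) :
    A ⊆ g • P := by
  intro a ha
  rw [mem_smul_iff]
  apply h
  rw [← hA]
  exact Set.smul_mem_smul_set ha

/-- the `N`-core of a prime is `N`-prime -/
theorem core_prime (N : Subgroup G) {P : Set R} (hP : IsPrimeTI R P) :
    IsSubgroupPrime R N (⋂ n : N, (n : G) • P) := by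
  have hsub : (⋂ n : N, (n : G) • P) ⊆ P := by
    have := Set.iInter_subset (fun n : N => (n : G) • P) (1 : N)
    rwa [Subgroup.coe_one, one_smul] at this
  refine ⟨ideal_iInter fun n => ideal_smul hP.1 _, ne_univ_of_subset hsub hP.2.1,
    smul_core_subgroup N P, ?_⟩
  intro A B hA hB hAst hBst hAB
  rcases hP.2.2 A B hA hB (fun a ha b hb => hsub (hAB a ha b hb)) with h | h
  · left
    apply Set.subset_iInter
    intro n
    exact stable_subset_smul (hAst _ (inv_mem n.2)) h
  · right
    apply Set.subset_iInter
    intro n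
    exact stable_subset_smul (hBst _ (inv_mem n.2)) h

/-- Part B: the `G`-core of an `N`-prime is `G`-prime. -/
theorem partB (N : Subgroup G) {Q : Set R} (hQ : IsSubgroupPrime R N Q) :
    IsGPrime G R (⋂ g : G, g • Q) := by
  have hsub : (⋂ g : G, g • Q) ⊆ Q := by
    have := Set.iInter_subset (fun g : G => g • Q) (1 : G)
    rwa [one_smul] at this
  refine ⟨ideal_iInter fun g => ideal_smul hQ.1 _, ne_univ_of_subset hsub hQ.2.1,
    fun g => smul_iInter_all g Q, ?_⟩
  intro A B hA hB hAst hBst hAB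
  rcases hQ.2.2.2 A B hA hB (fun g _ => hAst g) (fun g _ => hBst g)
      (fun a ha b hb => hsub (hAB a ha b hb)) with h | h
  · left
    exact Set.subset_iInter fun g => stable_subset_smul (hAst g⁻¹) h
  · right
    exact Set.subset_iInter fun g => stable_subset_smul (hBst g⁻¹) h

theorem smul_Nstable (N : Subgroup G) [N.Normal] {Q : Set R}
    (hQ : ∀ g ∈ N, g • Q = Q) (g : G) : ∀ m ∈ N, m • (g • Q) = g • Q := by
  intro m hm
  have h2 : g⁻¹ * m * g ∈ N := by
    have := Subgroup.Normal.conj_mem ‹N.Normal› m hm g⁻¹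
    rwa [inv_inv] at this
  have h3 : m * g = g * (g⁻¹ * m * g) := by group
  rw [smul_smul, h3, ← smul_smul, hQ _ h2]

theorem pow_smul_subset {Q : Set R} {k : G} (h : k • Q ⊆ Q) :
    ∀ j : ℕ, k ^ j • Q ⊆ Q := by
  intro j
  induction j with
  | zero => rw [pow_zero, one_smul]
  | succ j ih =>
    rw [pow_succ', mul_smul]
    exact (Set.smul_set_mono ih).trans h

theorem exists_pow_mem (N : Subgroup G) [N.FiniteIndex] (k : G) :
    ∃ m : ℕ, 0 < m ∧ k ^ m ∈ N := by
  obtain ⟨i, j, hne, hij⟩ := Finite.exists_ne_map_eq_of_infinite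
    (fun n : ℕ => (QuotientGroup.mk (k ^ n) : G ⧸ N))
  have main : ∀ i j : ℕ, i < j →
      (QuotientGroup.mk (k ^ i) : G ⧸ N) = QuotientGroup.mk (k ^ j) →
      ∃ m : ℕ, 0 < m ∧ k ^ m ∈ N := by
    intro i j hlt heq
    refine ⟨j - i, Nat.sub_pos_of_lt hlt, ?_⟩
    have h1 : (k ^ i)⁻¹ * k ^ j ∈ N := QuotientGroup.eq.mp heq
    have h2 : (k ^ i)⁻¹ * k ^ j = k ^ (j - i) := by
      rw [show k ^ j = k ^ i * k ^ (j - i) by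
        rw [← pow_add, Nat.add_sub_cancel' hlt.le], inv_mul_cancel_left]
    rwa [h2] at h1
  rcases Ne.lt_or_gt hne with h | h
  · exact main i j h hij
  · exact main j i h hij.symm

theorem exists_translate_subset (N : Subgroup G) [N.Normal] [N.FiniteIndex]
    {Q₀ Q : Set R} (hQ₀i : IsTwoSidedIdealSet R Q₀) (hQ₀st : ∀ g ∈ N, g • Q₀ = Q₀)
    (hQ : IsSubgroupPrime R N Q) (h : (⋂ g : G, g • Q₀) ⊆ Q) :
    ∃ g : G, g • Q₀ ⊆ Q := by
  obtain ⟨n, ⟨e⟩⟩ := Finite.exists_equiv_fin (G ⧸ N)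
  obtain ⟨i, hi⟩ := multiPrime (N : Set G) (fun g hg => inv_mem hg) Q hQ.1 hQ.2.1
    hQ.2.2.1 hQ.2.2.2 n (fun i => (e.symm i).out • Q₀)
    (fun i => ideal_smul hQ₀i _)
    (fun i g hg => smul_Nstable N hQ₀st _ g hg)
    (fun f hf => by
      apply h
      apply Set.mem_iInter.mpr
      intro g
      have key : (e.symm (e (QuotientGroup.mk g))).out • Q₀ = g • Q₀ := by
        rw [Equiv.symm_apply_apply]
        obtain ⟨h', hh⟩ := QuotientGroup.mk_out_eq_mul N g
        rw [hh, mul_smul, hQ₀st _ h'.2]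
      rw [← key]
      exact list_prod_mem (ideal_smul hQ₀i _) _ _
        (List.mem_ofFn.mpr ⟨e (QuotientGroup.mk g), rfl⟩)
        (hf (e (QuotientGroup.mk g))))
  exact ⟨(e.symm i).out, hi⟩

theorem eq_smul_of_core_eq (N : Subgroup G) [N.Normal] [N.FiniteIndex]
    {Q₀ Q : Set R} (hQ₀ : IsSubgroupPrime R N Q₀) (hQ : IsSubgroupPrime R N Q)
    (h : (⋂ g : G, g • Q₀) = ⋂ g : G, g • Q) : ∃ g : G, Q = g • Q₀ := by
  have hsub : ∀ Q' : Set R, (⋂ g : G, g • Q') ⊆ Q' := by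
    intro Q'
    have := Set.iInter_subset (fun g : G => g • Q') (1 : G)
    rwa [one_smul] at this
  obtain ⟨g, hg⟩ := exists_translate_subset N hQ₀.1 hQ₀.2.2.1 hQ (h ▸ hsub Q)
  obtain ⟨g', hg'⟩ := exists_translate_subset N hQ.1 hQ.2.2.1 hQ₀ (h ▸ hsub Q₀)
  have hk : (g' * g) • Q₀ ⊆ Q₀ := by
    rw [mul_smul]
    exact (Set.smul_set_mono hg).trans hg'
  obtain ⟨m, hm, hmN⟩ := exists_pow_mem N (g' * g)
  have h1 : Q₀ ⊆ (g' * g) • Q₀ := by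
    have e1 : Q₀ = (g' * g) ^ m • Q₀ := (hQ₀.2.2.1 _ hmN).symm
    have e2 : (g' * g) ^ m • Q₀ ⊆ (g' * g) • Q₀ := by
      rw [show m = (m - 1) + 1 from (Nat.succ_pred_eq_of_pos hm).symm, pow_succ', mul_smul]
      exact Set.smul_set_mono (pow_smul_subset hk (m - 1))
    exact e1.subset.trans e2
  have h2 : Q₀ ⊆ g' • Q := by
    rw [mul_smul] at h1
    exact h1.trans (Set.smul_set_mono hg)
  have h3 : g' • Q = Q₀ := subset_antisymm hg' h2
  exact ⟨g'⁻¹, by rw [← h3, inv_smul_smul]⟩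

end GPrimeAux


/-- let `N ⊴ G` be a normal subgroup of finite index, with `G`
acting by ring automorphisms on `R`, and suppose every two-sided ideal of `R`
contains a finite product of primes containing it.  Then every `G`-prime of `R`
is `⋂_{x ∈ G/N} x•Q = ⋂_{g ∈ G} g•Q` for some `N`-prime `Q`; conversely every
such intersection is `G`-prime; and the set of `N`-primes is finite iff the set
of `G`-primes is finite. -/
theorem gPrime_iff_subgroupPrime {G R : Type*} [Group G] [Ring R]
    [MulSemiringAction G R] (N : Subgroup G) [N.Normal] [N.FiniteIndex]
    (hNoeth : ∀ A : Set R, IsTwoSidedIdealSet R A →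
      ∃ (n : ℕ) (Ps : Fin n → Set R), (∀ i, IsPrimeTI R (Ps i)) ∧ (∀ i, A ⊆ Ps i) ∧
        ∀ f : Fin n → R, (∀ i, f i ∈ Ps i) → (List.ofFn f).prod ∈ A) :
    (∀ I : Set R, IsGPrime G R I →
        ∃ Q : Set R, IsSubgroupPrime R N Q ∧ I = ⋂ g : G, g • Q) ∧
    (∀ Q : Set R, IsSubgroupPrime R N Q → IsGPrime G R (⋂ g : G, g • Q)) ∧
    ({I : Set R | IsSubgroupPrime R N I}.Finite ↔ {I : Set R | IsGPrime G R I}.Finite) := by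
  classical
  have partA : ∀ I : Set R, IsGPrime G R I →
      ∃ Q : Set R, IsSubgroupPrime R N Q ∧ I = ⋂ g : G, g • Q := by
    intro I hI
    obtain ⟨n, Ps, hPs, hsub, hprod⟩ := hNoeth I hI.1
    set Qs : Fin n → Set R := fun i => ⋂ m : N, (m : G) • Ps i with hQsdef
    have hKsub : ∀ i, (⋂ g : G, g • Qs i) ⊆ Ps i := by
      intro i
      have h1 : (⋂ g : G, g • Qs i) ⊆ Qs i := by
        have := Set.iInter_subset (fun g : G => g • Qs i) 1
        rwa [one_smul] at this
      have h2 : Qs i ⊆ Ps i := by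
        have := Set.iInter_subset (fun m : N => (m : G) • Ps i) 1
        rwa [Subgroup.coe_one, one_smul] at this
      exact h1.trans h2
    obtain ⟨i, hi⟩ := GPrimeAux.multiPrime (Set.univ : Set G) (fun g _ => Set.mem_univ _)
      I hI.1 hI.2.1 (fun g _ => hI.2.2.1 g)
      (fun A B hA hB hAst hBst => hI.2.2.2 A B hA hB (fun g => hAst g (Set.mem_univ g))
        (fun g => hBst g (Set.mem_univ g)))
      n (fun i => ⋂ g : G, g • Qs i)
      (fun i => GPrimeAux.ideal_iInter fun g => GPrimeAux.ideal_smul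
        (GPrimeAux.ideal_iInter fun m => GPrimeAux.ideal_smul (hPs i).1 _) _)
      (fun i g _ => GPrimeAux.smul_iInter_all g (Qs i))
      (fun f hf => hprod f (fun i => hKsub i (hf i)))
    refine ⟨Qs i, GPrimeAux.core_prime N (hPs i), ?_⟩
    apply subset_antisymm ?_ hi
    apply Set.subset_iInter
    intro g
    apply GPrimeAux.stable_subset_smul (hI.2.2.1 g⁻¹)
    apply Set.subset_iInter
    intro m
    exact GPrimeAux.stable_subset_smul (hI.2.2.1 _) (hsub i)
  refine ⟨partA, fun Q hQ => GPrimeAux.partB N hQ, ?_, ?_⟩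
  · intro hNfin
    apply Set.Finite.subset (hNfin.image (fun Q => ⋂ g : G, g • Q))
    intro I hI
    obtain ⟨Q, hQ, hIQ⟩ := partA I hI
    exact ⟨Q, hQ, hIQ.symm⟩
  · intro hGfin
    have fiber_fin : ∀ I : Set R,
        {Q : Set R | IsSubgroupPrime R N Q ∧ (⋂ g : G, g • Q) = I}.Finite := by
      intro I
      by_cases hne : {Q : Set R | IsSubgroupPrime R N Q ∧ (⋂ g : G, g • Q) = I}.Nonempty
      · obtain ⟨Q₀, hQ₀, hQ₀I⟩ := hne
        apply Set.Finite.subset (Set.finite_range (fun q : G ⧸ N => q.out • Q₀))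
        rintro Q ⟨hQ, hQI⟩
        obtain ⟨g, rfl⟩ := GPrimeAux.eq_smul_of_core_eq N hQ₀ hQ (hQ₀I.trans hQI.symm)
        obtain ⟨h', hh⟩ := QuotientGroup.mk_out_eq_mul N g
        refine ⟨QuotientGroup.mk g, ?_⟩
        show (QuotientGroup.mk g : G ⧸ N).out • Q₀ = g • Q₀
        rw [hh, mul_smul, hQ₀.2.2.1 _ h'.2]
      · rw [Set.not_nonempty_iff_eq_empty] at hne
        rw [hne]
        exact Set.finite_empty
    apply Set.Finite.subset (Set.Finite.biUnion hGfin (fun I _ => fiber_fin I))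
    intro Q hQ
    exact Set.mem_biUnion (GPrimeAux.partB N hQ) ⟨hQ, rfl⟩
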